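/- Let I ⊆ ℝ be an open interval, H ∈ ℝ a constant, and h : I → ℝ a twice continuously differentiable function with 4h(z) + h'(z)² > 0 for all z ∈ I. If h satisfies 8h(z) + 4h'(z)² − 4h(z)h''(z) = −2H·(4h(z) + h'(z)²)^{3/2} for all z ∈ I, then there exists a constant c ∈ ℝ such that 2h(z)/√(4h(z) + h'(z)²) = −H·h(z) + c for all z ∈ I. -/

import Mathlib

/-- First integral of the Delaunay ODE: if `h` is C² on an open interval with
`4h + h'² > 0` and satisfies `8h + 4h'² − 4hh'' = −2H(4h + h'²)^{3/2}`, then there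
is a constant `c` with `2h/√(4h + h'²) = −Hh + c`. -/
theorem stmt_2 (a b H : ℝ) (h : ℝ → ℝ)
    (hC : ContDiffOn ℝ 2 h (Set.Ioo a b))
    (hpos : ∀ z ∈ Set.Ioo a b, 4 * h z + (deriv h z) ^ 2 > 0)
    (hode : ∀ z ∈ Set.Ioo a b,
      8 * h z + 4 * (deriv h z) ^ 2 - 4 * h z * deriv (deriv h) z
        = -2 * H * (4 * h z + (deriv h z) ^ 2) ^ ((3 : ℝ) / 2)) :
    ∃ c : ℝ, ∀ z ∈ Set.Ioo a b,
      2 * h z / Real.sqrt (4 * h z + (deriv h z) ^ 2) = -H * h z + c := by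
  rcases Set.eq_empty_or_nonempty (Set.Ioo a b) with he | ⟨z₀, hz₀⟩
  · exact ⟨0, fun z hz => ((he ▸ hz : z ∈ (∅ : Set ℝ))).elim⟩
  set g : ℝ → ℝ := fun z => 2 * h z / Real.sqrt (4 * h z + (deriv h z) ^ 2) + H * h z with hg
  have hC' : ContDiffOn ℝ 1 (deriv h) (Set.Ioo a b) :=
    hC.deriv_of_isOpen isOpen_Ioo (by norm_num)
  have key : ∀ z ∈ Set.Ioo a b, HasDerivAt g 0 z := by
    intro z hz
    have hmem := isOpen_Ioo.mem_nhds hz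
    have hd1 : HasDerivAt h (deriv h z) z :=
      ((hC.contDiffAt hmem).differentiableAt (by norm_num)).hasDerivAt
    have hd2 : HasDerivAt (deriv h) (deriv (deriv h) z) z :=
      ((hC'.contDiffAt hmem).differentiableAt one_ne_zero).hasDerivAt
    set h' := deriv h z
    set h'' := deriv (deriv h) z
    set Q := 4 * h z + h' ^ 2 with hQdef
    have hQpos : 0 < Q := hpos z hz
    have hQ : HasDerivAt (fun z => 4 * h z + (deriv h z) ^ 2)
        (4 * h' + 2 * h' * h'') z := by
      have := ((hd1.const_mul 4).add (hd2.pow 2))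
      exact this.congr_deriv (by rw [show (2:ℕ) - 1 = 1 from rfl]; push_cast; ring)
    have hsqrt : HasDerivAt (fun z => Real.sqrt (4 * h z + (deriv h z) ^ 2))
        ((4 * h' + 2 * h' * h'') / (2 * Real.sqrt Q)) z := hQ.sqrt hQpos.ne'
    set s := Real.sqrt Q with hsdef
    have hs : 0 < s := Real.sqrt_pos.mpr hQpos
    have hs2 : s ^ 2 = Q := Real.sq_sqrt hQpos.le
    have hD : HasDerivAt g
        ((2 * h' * s - 2 * h z * ((4 * h' + 2 * h' * h'') / (2 * s))) / s ^ 2 + H * h') z := by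
      exact ((hd1.const_mul 2).div hsqrt hs.ne').add (hd1.const_mul H)
    have hrpow : Q ^ ((3 : ℝ) / 2) = Q * s := by
      rw [hsdef, Real.sqrt_eq_rpow,
        show (3 : ℝ) / 2 = 1 + 1 / 2 by norm_num, Real.rpow_add hQpos, Real.rpow_one]
    have hode' : 8 * h z + 4 * h' ^ 2 - 4 * h z * h'' = -2 * H * (Q * s) := by
      rw [← hrpow]; exact hode z hz
    have : (2 * h' * s - 2 * h z * ((4 * h' + 2 * h' * h'') / (2 * s))) / s ^ 2 + H * h' = 0 := by
      rw [hQdef] at hode'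
      field_simp
      linear_combination (h' / 2) * hode' + (2 * h' + H * h' * s) * hs2
    rwa [this] at hD
  refine ⟨g z₀, fun z hz => ?_⟩
  have hconst : g z = g z₀ := by
    have := Convex.norm_image_sub_le_of_norm_hasDerivWithin_le
      (f := g) (f' := fun _ => 0) (s := Set.Ioo a b) (C := 0)
      (fun x hx => (key x hx).hasDerivWithinAt) (fun x _ => by simp)
      (convex_Ioo a b) hz₀ hz
    have h0 : ‖g z - g z₀‖ ≤ 0 := by simpa using this
    have := le_antisymm h0 (norm_nonneg _)
    simpa [sub_eq_zero] using this
  have : 2 * h z / Real.sqrt (4 * h z + (deriv h z) ^ 2) + H * h z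
      = 2 * h z₀ / Real.sqrt (4 * h z₀ + (deriv h z₀) ^ 2) + H * h z₀ := hconst
  linarith [this]
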